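/- Let β ∈ Z[√2] with β ≥ 0 and β• ≥ 0, and let n = β•·β ∈ ℤ. If n is prime and n ≡ 1 (mod 8), then there exists α ∈ Z[ω] such that α†·α = β. -/

import Mathlib

noncomputable def omegaC : ℂ := (1 + Complex.I) / (Real.sqrt 2 : ℝ)


@[ext] structure Zw where
  x0 : ℤ
  x1 : ℤ
  x2 : ℤ
  x3 : ℤ
deriving DecidableEq

namespace Zw

instance : Zero Zw := ⟨⟨0,0,0,0⟩⟩
instance : One Zw := ⟨⟨1,0,0,0⟩⟩
instance : Add Zw := ⟨fun a b => ⟨a.x0+b.x0, a.x1+b.x1, a.x2+b.x2, a.x3+b.x3⟩⟩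
instance : Neg Zw := ⟨fun a => ⟨-a.x0, -a.x1, -a.x2, -a.x3⟩⟩
instance : Mul Zw := ⟨fun a b =>
  ⟨a.x0*b.x0 - a.x1*b.x3 - a.x2*b.x2 - a.x3*b.x1,
   a.x0*b.x1 + a.x1*b.x0 - a.x2*b.x3 - a.x3*b.x2,
   a.x0*b.x2 + a.x1*b.x1 + a.x2*b.x0 - a.x3*b.x3,
   a.x0*b.x3 + a.x1*b.x2 + a.x2*b.x1 + a.x3*b.x0⟩⟩

@[simp] lemma zero_def : (0 : Zw) = ⟨0,0,0,0⟩ := rfl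
@[simp] lemma one_def : (1 : Zw) = ⟨1,0,0,0⟩ := rfl
@[simp] lemma add_def (a b : Zw) : a + b = ⟨a.x0+b.x0, a.x1+b.x1, a.x2+b.x2, a.x3+b.x3⟩ := rfl
@[simp] lemma neg_def (a : Zw) : -a = ⟨-a.x0, -a.x1, -a.x2, -a.x3⟩ := rfl
@[simp] lemma mul_def (a b : Zw) : a * b =
  ⟨a.x0*b.x0 - a.x1*b.x3 - a.x2*b.x2 - a.x3*b.x1,
   a.x0*b.x1 + a.x1*b.x0 - a.x2*b.x3 - a.x3*b.x2,
   a.x0*b.x2 + a.x1*b.x1 + a.x2*b.x0 - a.x3*b.x3,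
   a.x0*b.x3 + a.x1*b.x2 + a.x2*b.x1 + a.x3*b.x0⟩ := rfl

instance : CommRing Zw where
  add_assoc a b c := by ext <;> simp <;> ring
  zero_add a := by ext <;> simp
  add_zero a := by ext <;> simp
  add_comm a b := by ext <;> simp <;> ring
  neg_add_cancel a := by ext <;> simp
  mul_assoc a b c := by ext <;> simp <;> ring
  one_mul a := by ext <;> simp
  mul_one a := by ext <;> simp
  left_distrib a b c := by ext <;> simp <;> ring
  right_distrib a b c := by ext <;> simp <;> ring
  zero_mul a := by ext <;> simp
  mul_zero a := by ext <;> simp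
  mul_comm a b := by ext <;> simp <;> ring
  nsmul := nsmulRec
  zsmul := zsmulRec

instance : Nontrivial Zw := ⟨⟨0, 1, fun h => by simpa using congrArg Zw.x0 h⟩⟩

@[simp] lemma sub_def (a b : Zw) : a - b = ⟨a.x0-b.x0, a.x1-b.x1, a.x2-b.x2, a.x3-b.x3⟩ := by
  rw [sub_eq_add_neg]; ext <;> simp <;> ring

/-- scalar embedding ℤ → Zw -/
def C (n : ℤ) : Zw := ⟨n, 0, 0, 0⟩

@[simp] lemma C_mul (m n : ℤ) : C (m * n) = C m * C n := by simp [C]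
@[simp] lemma C_x0 (n : ℤ) : (C n).x0 = n := rfl

def ww : Zw := ⟨0,1,0,0⟩

/-- the norm -/
def N (a : Zw) : ℤ :=
  (a.x0^2+a.x1^2+a.x2^2+a.x3^2)^2 - 2*(a.x0*a.x1+a.x1*a.x2+a.x2*a.x3-a.x0*a.x3)^2

/-- conjugations -/
def s3 (a : Zw) : Zw := ⟨a.x0, a.x3, -a.x2, a.x1⟩
def s5 (a : Zw) : Zw := ⟨a.x0, -a.x1, a.x2, -a.x3⟩
def s7 (a : Zw) : Zw := ⟨a.x0, -a.x3, -a.x2, -a.x1⟩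

lemma s3_mul (a b : Zw) : s3 (a * b) = s3 a * s3 b := by ext <;> simp [s3] <;> ring
lemma s5_mul (a b : Zw) : s5 (a * b) = s5 a * s5 b := by ext <;> simp [s5] <;> ring
lemma s7_mul (a b : Zw) : s7 (a * b) = s7 a * s7 b := by ext <;> simp [s7] <;> ring
@[simp] lemma s3_s3 (a : Zw) : s3 (s3 a) = a := by ext <;> simp [s3]
@[simp] lemma s5_s5 (a : Zw) : s5 (s5 a) = a := by ext <;> simp [s5]
@[simp] lemma s7_s7 (a : Zw) : s7 (s7 a) = a := by ext <;> simp [s7]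
@[simp] lemma s3_one : s3 1 = 1 := by ext <;> simp [s3]
@[simp] lemma s5_one : s5 1 = 1 := by ext <;> simp [s5]
@[simp] lemma s7_one : s7 1 = 1 := by ext <;> simp [s7]
@[simp] lemma s3_C (n : ℤ) : s3 (C n) = C n := by ext <;> simp [s3, C]
@[simp] lemma s5_C (n : ℤ) : s5 (C n) = C n := by ext <;> simp [s5, C]
@[simp] lemma s7_C (n : ℤ) : s7 (C n) = C n := by ext <;> simp [s7, C]

/-- key identity: product of conjugates equals the norm -/
lemma prod_conj (a : Zw) : a * s3 a * s5 a * s7 a = C (N a) := by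
  ext <;> simp [s3, s5, s7, N, C] <;> ring

lemma N_mul (a b : Zw) : N (a * b) = N a * N b := by
  have h : C (N (a*b)) = C (N a * N b) := by
    rw [C_mul, ← prod_conj, ← prod_conj, ← prod_conj]
    rw [s3_mul, s5_mul, s7_mul]; ring
  simpa [C, Zw.ext_iff] using h

@[simp] lemma N_one : N 1 = 1 := by simp [N]
@[simp] lemma N_C (n : ℤ) : N (C n) = n^4 := by simp [N, C]; ring
lemma N_s3 (a : Zw) : N (s3 a) = N a := by simp [N, s3]; ring
lemma N_s5 (a : Zw) : N (s5 a) = N a := by simp [N, s5]; ring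
lemma N_s7 (a : Zw) : N (s7 a) = N a := by simp [N, s7]; ring

lemma N_dvd {a b : Zw} (h : a ∣ b) : N a ∣ N b := by
  obtain ⟨c, rfl⟩ := h; exact ⟨N c, N_mul a c⟩

lemma C_dvd_C {m n : ℤ} (h : C m ∣ C n) : m ∣ n := by
  obtain ⟨c, hc⟩ := h
  exact ⟨c.x0, by simpa [C, Zw.ext_iff] using congrArg Zw.x0 hc⟩

lemma isUnit_of_N {a : Zw} (h : N a = 1 ∨ N a = -1) : IsUnit a := by
  rcases h with h | h
  · exact IsUnit.of_mul_eq_one (a := a) (s3 a * s5 a * s7 a) (by rw [← mul_assoc, ← mul_assoc, prod_conj, h]; rfl)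
  · exact IsUnit.of_mul_eq_one (a := a) (-(s3 a * s5 a * s7 a)) (by rw [mul_neg, ← mul_assoc, ← mul_assoc, prod_conj, h]; ext <;> simp [C])

lemma N_unit {a : Zw} (h : IsUnit a) : N a = 1 ∨ N a = -1 := by
  obtain ⟨b, hb⟩ := h.exists_right_inv
  have : N a * N b = 1 := by rw [← N_mul, hb, N_one]
  exact Int.isUnit_iff.mp (IsUnit.of_mul_eq_one _ this)


/-- trace and cross coefficient -/
def S (a : Zw) : ℤ := a.x0^2+a.x1^2+a.x2^2+a.x3^2
def Cr (a : Zw) : ℤ := a.x0*a.x1+a.x1*a.x2+a.x2*a.x3-a.x0*a.x3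

lemma N_eq (a : Zw) : N a = (S a)^2 - 2*(Cr a)^2 := rfl

lemma conj_mul_self (a : Zw) : s7 a * a = ⟨S a, Cr a, 0, -(Cr a)⟩ := by
  ext <;> simp [s7, S, Cr] <;> ring

lemma emb_nonneg (a : Zw) : 0 ≤ (S a : ℝ) + (Cr a : ℝ) * Real.sqrt 2 := by
  have hs : Real.sqrt 2 ^ 2 = 2 := Real.sq_sqrt (by norm_num)
  have h1 := sq_nonneg ((a.x0 : ℝ) + ((a.x1 : ℝ) - a.x3) * (Real.sqrt 2/2))
  have h2 := sq_nonneg ((a.x2 : ℝ) + ((a.x1 : ℝ) + a.x3) * (Real.sqrt 2/2))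
  simp only [S, Cr]
  push_cast
  nlinarith [h1, h2, hs]

lemma emb_nonneg' (a : Zw) : 0 ≤ (S a : ℝ) - (Cr a : ℝ) * Real.sqrt 2 := by
  have hs : Real.sqrt 2 ^ 2 = 2 := Real.sq_sqrt (by norm_num)
  have h1 := sq_nonneg ((a.x0 : ℝ) - ((a.x1 : ℝ) - a.x3) * (Real.sqrt 2/2))
  have h2 := sq_nonneg ((a.x2 : ℝ) - ((a.x1 : ℝ) + a.x3) * (Real.sqrt 2/2))
  simp only [S, Cr]
  push_cast
  nlinarith [h1, h2, hs]

lemma sq_ge_two_mul_sq (a : Zw) : 2*(Cr a)^2 ≤ (S a)^2 := by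
  have h := mul_nonneg (emb_nonneg a) (emb_nonneg' a)
  have hs : Real.sqrt 2 ^ 2 = 2 := Real.sq_sqrt (by norm_num)
  have : (0:ℝ) ≤ (S a:ℝ)^2 - 2*(Cr a:ℝ)^2 := by nlinarith [h, hs]
  have h2 : (2*(Cr a)^2 : ℝ) ≤ ((S a)^2 : ℝ) := by push_cast; linarith
  exact_mod_cast h2

lemma N_nonneg (a : Zw) : 0 ≤ N a := by
  rw [N_eq]; linarith [sq_ge_two_mul_sq a]

lemma S_nonneg (a : Zw) : 0 ≤ S a := by simp only [S]; positivity

lemma eq_zero_of_N_eq_zero {a : Zw} (h : N a = 0) : a = 0 := by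
  rw [N_eq] at h
  -- S^2 = 2 Cr^2 forces Cr = 0 by irrationality of sqrt 2
  have hcr : Cr a = 0 := by
    by_contra hcr
    have h2 : ((S a : ℝ))^2 = 2*((Cr a : ℝ))^2 := by
      have : ((S a)^2 : ℤ) = 2*(Cr a)^2 := by linarith
      exact_mod_cast congrArg (fun t : ℤ => (t : ℝ)) this
    have hs2 : Real.sqrt 2 = |((S a : ℚ) / (Cr a : ℚ) : ℚ)| := by
      have hcr' : ((Cr a : ℝ)) ≠ 0 := by exact_mod_cast hcr
      have : ((S a : ℝ) / (Cr a : ℝ))^2 = 2 := by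
        rw [div_pow, h2]; field_simp
      have habs : Real.sqrt 2 = |(S a : ℝ) / (Cr a : ℝ)| := by
        rw [← this, Real.sqrt_sq_eq_abs]
      rw [habs]
      push_cast
      rfl
    have : Irrational (Real.sqrt 2) := irrational_sqrt_two
    rw [hs2] at this
    exact this ⟨|((S a : ℚ) / (Cr a : ℚ))|, by push_cast; rfl⟩
  have hS : S a = 0 := by
    rw [hcr] at h; simpa using pow_eq_zero_iff (n := 2) (by norm_num) |>.mp (by linarith)
  simp only [S] at hS
  have e0 : a.x0 = 0 := by
    have : a.x0^2 = 0 := by nlinarith [sq_nonneg a.x1, sq_nonneg a.x2, sq_nonneg a.x3]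
    exact (pow_eq_zero_iff two_ne_zero).mp this
  have e1 : a.x1 = 0 := by
    have : a.x1^2 = 0 := by nlinarith [sq_nonneg a.x0, sq_nonneg a.x2, sq_nonneg a.x3]
    exact (pow_eq_zero_iff two_ne_zero).mp this
  have e2 : a.x2 = 0 := by
    have : a.x2^2 = 0 := by nlinarith [sq_nonneg a.x0, sq_nonneg a.x1, sq_nonneg a.x3]
    exact (pow_eq_zero_iff two_ne_zero).mp this
  have e3 : a.x3 = 0 := by
    have : a.x3^2 = 0 := by nlinarith [sq_nonneg a.x0, sq_nonneg a.x1, sq_nonneg a.x2]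
    exact (pow_eq_zero_iff two_ne_zero).mp this
  ext <;> simp [e0, e1, e2, e3]

lemma N_pos {a : Zw} (h : a ≠ 0) : 0 < N a :=
  lt_of_le_of_ne (N_nonneg a) (fun he => h (eq_zero_of_N_eq_zero he.symm))


lemma N_lt_of_S_lt {v : Zw} {d : ℤ} (hd2 : 0 < d^2) (hS : S v < d^2) : N v < d^4 := by
  have h1 : S v * S v < d^2 * d^2 :=
    mul_lt_mul' hS.le hS (S_nonneg v) hd2
  rw [N_eq]
  nlinarith [sq_nonneg (Cr v), h1]

/-- the box bound -/
lemma box_lt {d : ℤ} (hd : d ≠ 0) (v : Zw)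
    (h0 : (2*v.x0)^2 ≤ d^2) (h1 : (2*v.x1)^2 ≤ d^2)
    (h2 : (2*v.x2)^2 ≤ d^2) (h3 : (2*v.x3)^2 ≤ d^2) : N v < d^4 := by
  have hd2 : 0 < d^2 := by positivity
  by_cases hall : (2*v.x0)^2 = d^2 ∧ (2*v.x1)^2 = d^2 ∧ (2*v.x2)^2 = d^2 ∧ (2*v.x3)^2 = d^2
  · obtain ⟨e0, e1, e2, e3⟩ := hall
    have hx0 : v.x0 ≠ 0 := by
      intro h; rw [h] at e0; simp at e0; nlinarith [hd2, e0]
    have hd4 : d^4 = 16*v.x0^4 := by nlinarith [e0]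
    have hx04 : 0 < v.x0^4 := by positivity
    have s1 : v.x1^2 = v.x0^2 := by nlinarith [e0, e1]
    have s2 : v.x2^2 = v.x0^2 := by nlinarith [e0, e2]
    have s3 : v.x3^2 = v.x0^2 := by nlinarith [e0, e3]
    have hcr : (Cr v)^2 = 4*v.x0^4 := by
      simp only [Cr]
      linear_combination (v.x0^2 + v.x2^2 + 2*v.x0*v.x2) * s1
        + (v.x0^2 + v.x3^2 + 2*v.x1*v.x3) * s2 + (2*v.x0^2 - 2*v.x0*v.x2) * s3
    have hs : S v = 4*v.x0^2 := by simp only [S]; linarith [s1, s2, s3]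
    rw [N_eq, hd4, hcr, hs]
    nlinarith [hx04]
  · have hSlt : S v < d^2 := by
      rcases not_and_or.mp hall with h | hall2
      · have hlt := lt_of_le_of_ne h0 h
        simp only [S]; nlinarith [h1, h2, h3, hlt]
      rcases not_and_or.mp hall2 with h | hall3
      · have hlt := lt_of_le_of_ne h1 h
        simp only [S]; nlinarith [h0, h2, h3, hlt]
      rcases not_and_or.mp hall3 with h | h
      · have hlt := lt_of_le_of_ne h2 h
        simp only [S]; nlinarith [h0, h1, h3, hlt]
      · have hlt := lt_of_le_of_ne h3 h
        simp only [S]; nlinarith [h0, h1, h2, hlt]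
    exact N_lt_of_S_lt hd2 hSlt


/-- quotient by rounding coordinates of a * s3 b * s5 b * s7 b over N b -/
def quot (a b : Zw) : Zw :=
  let d := N b
  let c := a * (s3 b * s5 b * s7 b)
  ⟨round ((c.x0 : ℚ)/(d:ℚ)), round ((c.x1 : ℚ)/(d:ℚ)),
   round ((c.x2 : ℚ)/(d:ℚ)), round ((c.x3 : ℚ)/(d:ℚ))⟩

def rem (a b : Zw) : Zw := a - b * quot a b

lemma round_bound (c d : ℤ) (hd : d ≠ 0) : (2*(c - d * round ((c:ℚ)/(d:ℚ))))^2 ≤ d^2 := by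
  set q : ℤ := round ((c:ℚ)/(d:ℚ)) with hq
  have h1 : |(c:ℚ)/(d:ℚ) - q| ≤ 1/2 := abs_sub_round _
  have hdq : ((d:ℚ)) ≠ 0 := Int.cast_ne_zero.mpr hd
  have h2 : |(c:ℚ) - d*q| ≤ |(d:ℚ)|/2 := by
    have : (c:ℚ) - d*q = ((c:ℚ)/(d:ℚ) - q) * d := by field_simp
    rw [this, abs_mul]
    calc |(c:ℚ)/(d:ℚ) - q| * |(d:ℚ)| ≤ (1/2) * |(d:ℚ)| := by
          exact mul_le_mul_of_nonneg_right h1 (abs_nonneg _)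
      _ = |(d:ℚ)|/2 := by ring
  have h3 : (2*((c:ℚ) - d*q))^2 ≤ (d:ℚ)^2 := by
    have habs : |2*((c:ℚ) - d*q)| ≤ |(d:ℚ)| := by
      rw [abs_mul]; simp only [abs_two]; linarith [h2]
    calc (2*((c:ℚ) - d*q))^2 = |2*((c:ℚ) - d*q)|^2 := (sq_abs _).symm
      _ ≤ |(d:ℚ)|^2 := by nlinarith [abs_nonneg (2*((c:ℚ) - d*q)), abs_nonneg ((d:ℚ)), habs]
      _ = (d:ℚ)^2 := sq_abs _
  exact_mod_cast h3

lemma rem_lt (a b : Zw) (hb : b ≠ 0) : (N (rem a b)).natAbs < (N b).natAbs := by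
  set d : ℤ := N b with hd
  have hd0 : d ≠ 0 := fun h => hb (eq_zero_of_N_eq_zero h)
  have hdpos : 0 < d := lt_of_le_of_ne (N_nonneg b) (Ne.symm hd0)
  set c : Zw := a * (s3 b * s5 b * s7 b) with hc
  set q : Zw := quot a b with hqdef
  have hq : q = ⟨round ((c.x0 : ℚ)/(d:ℚ)), round ((c.x1 : ℚ)/(d:ℚ)),
      round ((c.x2 : ℚ)/(d:ℚ)), round ((c.x3 : ℚ)/(d:ℚ))⟩ := rfl
  set v : Zw := c - C d * q with hv
  have hbc : b * c = C d * a := by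
    rw [hc, hd, ← prod_conj]; ring
  have hbv : C d * rem a b = b * v := by
    rw [rem, hv, ← hqdef]; linear_combination -hbc
  -- coordinates of v
  have hv0 : v.x0 = c.x0 - d * round ((c.x0 : ℚ)/(d:ℚ)) := by rw [hv, hq]; simp [C]
  have hv1 : v.x1 = c.x1 - d * round ((c.x1 : ℚ)/(d:ℚ)) := by rw [hv, hq]; simp [C]
  have hv2 : v.x2 = c.x2 - d * round ((c.x2 : ℚ)/(d:ℚ)) := by rw [hv, hq]; simp [C]
  have hv3 : v.x3 = c.x3 - d * round ((c.x3 : ℚ)/(d:ℚ)) := by rw [hv, hq]; simp [C]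
  have hNv : N v < d^4 := by
    apply box_lt hd0
    · rw [hv0]; exact round_bound _ _ hd0
    · rw [hv1]; exact round_bound _ _ hd0
    · rw [hv2]; exact round_bound _ _ hd0
    · rw [hv3]; exact round_bound _ _ hd0
  have hNeq : d^4 * N (rem a b) = d * N v := by
    have := congrArg N hbv
    rw [N_mul, N_mul, N_C, ← hd] at this
    linarith [this]
  have hfin : N (rem a b) < d := by
    by_contra hcon
    push_neg at hcon
    have h1 : d * N v = d^4 * N (rem a b) := hNeq.symm
    have h2 : d^4 * d ≤ d^4 * N (rem a b) := by
      apply mul_le_mul_of_nonneg_left hcon (by positivity)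
    have h3 : d * N v < d * d^4 := by
      apply mul_lt_mul_of_pos_left hNv hdpos
    nlinarith [h1, h2, h3]
  have h5 : (0:ℤ) ≤ N (rem a b) := N_nonneg _
  omega

instance : EuclideanDomain Zw where
  quotient := quot
  quotient_zero a := by
    ext <;> simp [quot, s3, s5, s7]
  remainder := rem
  quotient_mul_add_remainder_eq a b := by rw [rem]; ring
  r a b := (N a).natAbs < (N b).natAbs
  r_wellFounded := (measure fun x : Zw => (N x).natAbs).wf
  remainder_lt a b hb := rem_lt a b hb
  mul_left_not_lt a b hb := by
    intro hcon
    rw [N_mul] at hcon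
    have h1 : 0 < N b := lt_of_le_of_ne (N_nonneg b) (Ne.symm (fun h => hb (eq_zero_of_N_eq_zero h)))
    rw [Int.natAbs_mul] at hcon
    have h2 : 1 ≤ (N b).natAbs := by omega
    exact absurd hcon (not_lt.mpr (Nat.le_mul_of_pos_right _ (by omega)))


instance : NoZeroDivisors Zw where
  eq_zero_or_eq_zero_of_mul_eq_zero {a b} hab := by
    by_contra hc
    push_neg at hc
    have h1 := N_pos hc.1
    have h2 := N_pos hc.2
    have h3 : N (a*b) = 0 := by rw [hab]; simp [N]
    rw [N_mul] at h3
    nlinarith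

def e3 : Zw ≃+* Zw where
  toFun := s3
  invFun := s3
  left_inv := s3_s3
  right_inv := s3_s3
  map_mul' := s3_mul
  map_add' a b := by ext <;> simp [s3] <;> ring

def e5 : Zw ≃+* Zw where
  toFun := s5
  invFun := s5
  left_inv := s5_s5
  right_inv := s5_s5
  map_mul' := s5_mul
  map_add' a b := by ext <;> simp [s5] <;> ring

def e7 : Zw ≃+* Zw where
  toFun := s7
  invFun := s7
  left_inv := s7_s7
  right_inv := s7_s7
  map_mul' := s7_mul
  map_add' a b := by ext <;> simp [s7] <;> ring

lemma prime_s3 {l : Zw} (h : Prime l) : Prime (s3 l) := (MulEquiv.prime_iff e3.toMulEquiv).mpr h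
lemma prime_s5 {l : Zw} (h : Prime l) : Prime (s5 l) := (MulEquiv.prime_iff e5.toMulEquiv).mpr h
lemma prime_s7 {l : Zw} (h : Prime l) : Prime (s7 l) := (MulEquiv.prime_iff e7.toMulEquiv).mpr h

lemma dvd_s3 {a b : Zw} (h : a ∣ b) : s3 a ∣ s3 b := by
  obtain ⟨c, rfl⟩ := h; exact ⟨s3 c, s3_mul a c⟩
lemma dvd_s5 {a b : Zw} (h : a ∣ b) : s5 a ∣ s5 b := by
  obtain ⟨c, rfl⟩ := h; exact ⟨s5 c, s5_mul a c⟩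
lemma dvd_s7 {a b : Zw} (h : a ∣ b) : s7 a ∣ s7 b := by
  obtain ⟨c, rfl⟩ := h; exact ⟨s7 c, s7_mul a c⟩

end Zw

/-- Pell descent: positive units of norm one in Z[√2] are squares of units. -/
lemma pell_sq : ∀ m : ℕ, ∀ e0 e1 : ℤ, e0.toNat = m → 1 ≤ e0 → e0^2 - 2*e1^2 = 1 →
    ∃ x0 x1 : ℤ, e0 = x0^2 + 2*x1^2 ∧ e1 = 2*x0*x1 := by
  intro m
  induction m using Nat.strong_induction_on with
  | _ m ih =>
    intro e0 e1 hm h1 h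
    rcases lt_trichotomy e1 0 with he1 | he1 | he1
    · -- e1 < 0 : multiply by (1+√2)^2 = 3+2√2
      have he1' : e1 ≤ -1 := by omega
      have hnorm : (3*e0+4*e1)^2 - 2*(3*e1+2*e0)^2 = 1 := by linear_combination h
      have hpos : 1 ≤ 3*e0+4*e1 := by nlinarith [h, h1, he1']
      have hlt : 3*e0+4*e1 < e0 := by nlinarith [h, h1, he1']
      obtain ⟨x0, x1, hx0, hx1⟩ := ih (3*e0+4*e1).toNat (by omega) (3*e0+4*e1) (3*e1+2*e0)
        rfl hpos hnorm
      exact ⟨-x0 + 2*x1, x0 - x1, by linear_combination 3*hx0 - 4*hx1,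
        by linear_combination -2*hx0 + 3*hx1⟩
    · refine ⟨1, 0, ?_, by simp [he1]⟩
      have : e0^2 = 1 := by rw [he1] at h; linarith
      have : (e0-1)*(e0+1) = 0 := by linear_combination this
      rcases mul_eq_zero.mp this with h' | h'
      · nlinarith [h']
      · nlinarith [h', h1]
    · -- e1 > 0 : multiply by (1+√2)^(-2) = 3-2√2
      have he1' : 1 ≤ e1 := he1
      have hnorm : (3*e0-4*e1)^2 - 2*(3*e1-2*e0)^2 = 1 := by linear_combination h
      have hpos : 1 ≤ 3*e0-4*e1 := by nlinarith [h, h1, he1']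
      have hlt : 3*e0-4*e1 < e0 := by nlinarith [h, h1, he1']
      obtain ⟨x0, x1, hx0, hx1⟩ := ih (3*e0-4*e1).toNat (by omega) (3*e0-4*e1) (3*e1-2*e0)
        rfl hpos hnorm
      exact ⟨x0 + 2*x1, x0 + x1, by linear_combination 3*hx0 + 4*hx1,
        by linear_combination 2*hx0 + 3*hx1⟩

lemma exists_fourth_root (q : ℕ) [hq : Fact q.Prime] (h8 : q % 8 = 1) :
    ∃ z : ℤ, ((z : ZMod q))^4 = -1 := by
  have hq2 : 2 ≤ q := hq.out.two_le
  have hq1 : ∃ m, q - 1 = 8 * m ∧ 0 < m := by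
    refine ⟨(q-1)/8, by omega, by omega⟩
  obtain ⟨m, hm, hm0⟩ := hq1
  obtain ⟨g, hg⟩ := IsCyclic.exists_generator (α := (ZMod q)ˣ)
  have hcard : Fintype.card (ZMod q)ˣ = q - 1 := ZMod.card_units q
  have horder : orderOf g = q - 1 := by
    rw [orderOf_eq_card_of_forall_mem_zpowers hg, Nat.card_eq_fintype_card, hcard]
  have hx8 : (g ^ m) ^ 8 = 1 := by
    rw [← pow_mul]
    have : g ^ (q - 1) = 1 := by rw [← horder]; exact pow_orderOf_eq_one g
    rw [show m * 8 = q - 1 by omega, this]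
  have hx4 : (g ^ m) ^ 4 ≠ 1 := by
    intro hcon
    rw [← pow_mul] at hcon
    have hd := orderOf_dvd_of_pow_eq_one hcon
    rw [horder] at hd
    have := Nat.le_of_dvd (by omega) hd
    omega
  set y : ZMod q := ((g ^ m : (ZMod q)ˣ) : ZMod q) with hy
  have hy8 : y ^ 8 = 1 := by
    rw [hy, ← Units.val_pow_eq_pow_val, hx8, Units.val_one]
  have hy4 : y ^ 4 ≠ 1 := by
    intro hcon
    apply hx4
    apply Units.ext
    rw [Units.val_pow_eq_pow_val, Units.val_one]
    exact hcon
  have hfac : (y^4 - 1) * (y^4 + 1) = 0 := by linear_combination hy8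
  rcases mul_eq_zero.mp hfac with hcon | hgood
  · exact absurd (by linear_combination hcon) hy4
  · refine ⟨(y.val : ℤ), ?_⟩
    have hcast : ((y.val : ℤ) : ZMod q) = y := by
      push_cast
      simp [ZMod.natCast_val, ZMod.cast_id]
    rw [hcast]
    linear_combination hgood

namespace Zw

set_option maxHeartbeats 3200000 in
lemma main_construct (p : ℤ) (hp : Prime p) (hmod8 : p % 8 = 1) (hppos : 0 < p)
    (b₀ b₁ : ℤ) (hn : p = b₀^2 - 2*b₁^2)
    (hb : 0 ≤ (b₀ : ℝ) + (b₁ : ℝ) * Real.sqrt 2)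
    (hbb : 0 ≤ (b₀ : ℝ) - (b₁ : ℝ) * Real.sqrt 2) :
    ∃ a : Zw, S a = b₀ ∧ Cr a = b₁ := by
  classical
  have hs2 : (Real.sqrt 2:ℝ)^2 = 2 := Real.sq_sqrt (by norm_num)
  have hs0 : (0:ℝ) < Real.sqrt 2 := Real.sqrt_pos.mpr (by norm_num)
  -- set up the prime q = p in ℕ
  set q : ℕ := p.toNat with hqdef
  have hq : (q:ℤ) = p := Int.toNat_of_nonneg hppos.le
  haveI hqp : Fact q.Prime := ⟨by
    have h1 : q = p.natAbs := by omega
    rw [h1, ← Int.prime_iff_natAbs_prime]; exact hp⟩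
  have hq8 : q % 8 = 1 := by omega
  obtain ⟨z, hz4⟩ := exists_fourth_root q hq8
  set zz : ZMod q := ((z : ℤ) : ZMod q) with hzz
  -- the evaluation homomorphism
  let φ : Zw →+* ZMod q :=
  { toFun := fun a => (a.x0 : ZMod q) + a.x1 * zz + a.x2 * zz^2 + a.x3 * zz^3
    map_one' := by simp
    map_zero' := by simp
    map_add' := fun a b => by simp only [add_def]; push_cast; ring
    map_mul' := fun a b => by
      simp only [mul_def]
      push_cast
      linear_combination (-((a.x1:ZMod q)*b.x3 + a.x2*b.x2 + a.x3*b.x1)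
        - ((a.x2:ZMod q)*b.x3 + a.x3*b.x2)*zz - (a.x3:ZMod q)*b.x3*zz^2) * hz4 }
  have hwzeq0 : ww - C z = (⟨-z, 1, 0, 0⟩ : Zw) := by ext <;> simp [ww, C]
  have hφww : φ (ww - C z) = 0 := by
    rw [hwzeq0]
    show ((-z : ℤ) : ZMod q) + ((1:ℤ) : ZMod q) * zz + ((0:ℤ) : ZMod q) * zz^2
      + ((0:ℤ) : ZMod q) * zz^3 = 0
    rw [hzz]; push_cast; ring
  have hφp : φ (C p) = 0 := by
    show ((p : ℤ) : ZMod q) + ((0:ℤ) : ZMod q) * zz + ((0:ℤ) : ZMod q) * zz^2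
      + ((0:ℤ) : ZMod q) * zz^3 = 0
    have : ((p : ℤ) : ZMod q) = 0 := by
      rw [← hq]; exact_mod_cast ZMod.natCast_self q
    rw [this]; push_cast; ring
  -- gcd
  set g : Zw := EuclideanDomain.gcd (C p) (ww - C z) with hg
  have hgl : g ∣ C p := EuclideanDomain.gcd_dvd_left _ _
  have hgr : g ∣ ww - C z := EuclideanDomain.gcd_dvd_right _ _
  have hg0 : g ≠ 0 := by
    intro h
    have := (EuclideanDomain.gcd_eq_zero_iff.mp h).1
    have h2 : p = 0 := by
      have := congrArg Zw.x0 this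
      simpa [C] using this
    exact hp.ne_zero h2
  have hgu : ¬ IsUnit g := by
    intro hu
    have hbez := EuclideanDomain.gcd_eq_gcd_ab (C p) (ww - C z)
    have hφg : φ g = 0 := by
      rw [hg, hbez, map_add, map_mul, map_mul, hφp, hφww]; ring
    obtain ⟨u, hu'⟩ := hu.exists_right_inv
    have : (1 : ZMod q) = 0 := by
      rw [← map_one φ, ← hu', map_mul, hφg, zero_mul]
    exact one_ne_zero this
  obtain ⟨l, hlirr, hlg⟩ := WfDvdMonoid.exists_irreducible_factor hgu hg0
  have hlprime : Prime l := (irreducible_iff_prime).mp hlirr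
  have hlp : l ∣ C p := hlg.trans hgl
  have hlz : l ∣ (⟨-z, 1, 0, 0⟩ : Zw) := hwzeq0 ▸ hlg.trans hgr
  -- conjugate divisibilities
  have hl3 : s3 l ∣ (⟨-z, 0, 0, 1⟩ : Zw) := by
    have := dvd_s3 hlz
    have he : s3 (⟨-z,1,0,0⟩ : Zw) = (⟨-z,0,0,1⟩ : Zw) := by ext <;> simp [s3]
    rwa [he] at this
  have hl5 : s5 l ∣ (⟨-z, -1, 0, 0⟩ : Zw) := by
    have := dvd_s5 hlz
    have he : s5 (⟨-z,1,0,0⟩ : Zw) = (⟨-z,-1,0,0⟩ : Zw) := by ext <;> simp [s5]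
    rwa [he] at this
  have hl7 : s7 l ∣ (⟨-z, 0, 0, -1⟩ : Zw) := by
    have := dvd_s7 hlz
    have he : s7 (⟨-z,1,0,0⟩ : Zw) = (⟨-z,0,0,-1⟩ : Zw) := by ext <;> simp [s7]
    rwa [he] at this
  have hl3p : s3 l ∣ C p := by have := dvd_s3 hlp; rwa [s3_C] at this
  have hl5p : s5 l ∣ C p := by have := dvd_s5 hlp; rwa [s5_C] at this
  have hl7p : s7 l ∣ C p := by have := dvd_s7 hlp; rwa [s7_C] at this
  -- the non-association engine
  have nassoc : ∀ l' : Zw, Prime l' → l' ∣ C p → ∀ δ : Zw, l' ∣ δ → N δ ∣ 16 → False := by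
    intro l' hl' hl'p δ hl'δ hNδ
    have h1 : N l' ∣ p^4 := by have := N_dvd hl'p; rwa [N_C] at this
    have h2 : N l' ∣ 16 := (N_dvd hl'δ).trans hNδ
    have hcop2 : IsCoprime (p:ℤ) 2 := by
      obtain ⟨k, hk⟩ : ∃ k, p = 2*k+1 := ⟨(p-1)/2, by omega⟩
      exact ⟨1, -k, by linarith⟩
    have hcop : IsCoprime (p^4) (16:ℤ) := by
      rw [show (16:ℤ) = 2^4 by norm_num]
      exact hcop2.pow
    have := hcop.isUnit_of_dvd' h1 h2
    rw [Int.isUnit_iff] at this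
    exact hl'.not_unit (isUnit_of_N this)
  have nd : ∀ (l1 l2 d1 d2 : Zw), Prime l2 → l2 ∣ C p → l1 ∣ d1 → l2 ∣ d2 →
      N (d1 - d2) ∣ 16 → l2 ∣ l1 → False := by
    intro l1 l2 d1 d2 hl2 hl2p hd1 hd2 hN hdvd
    exact nassoc l2 hl2 hl2p (d1 - d2) (dvd_sub (hdvd.trans hd1) hd2) hN
  -- six non-divisibility facts
  have nd13 : ¬ s3 l ∣ l :=
    fun h => nd l (s3 l) ⟨-z,1,0,0⟩ ⟨-z,0,0,1⟩ (prime_s3 hlprime) hl3p hlz hl3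
      (by norm_num [N, sub_def]) h
  have nd15 : ¬ s5 l ∣ l :=
    fun h => nd l (s5 l) ⟨-z,1,0,0⟩ ⟨-z,-1,0,0⟩ (prime_s5 hlprime) hl5p hlz hl5
      (by norm_num [N, sub_def]) h
  have nd17 : ¬ s7 l ∣ l :=
    fun h => nd l (s7 l) ⟨-z,1,0,0⟩ ⟨-z,0,0,-1⟩ (prime_s7 hlprime) hl7p hlz hl7
      (by norm_num [N, sub_def]) h
  have nd35 : ¬ s5 l ∣ s3 l :=
    fun h => nd (s3 l) (s5 l) ⟨-z,0,0,1⟩ ⟨-z,-1,0,0⟩ (prime_s5 hlprime) hl5p hl3 hl5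
      (by norm_num [N, sub_def]) h
  have nd37 : ¬ s7 l ∣ s3 l :=
    fun h => nd (s3 l) (s7 l) ⟨-z,0,0,1⟩ ⟨-z,0,0,-1⟩ (prime_s7 hlprime) hl7p hl3 hl7
      (by norm_num [N, sub_def]) h
  have nd57 : ¬ s7 l ∣ s5 l :=
    fun h => nd (s5 l) (s7 l) ⟨-z,-1,0,0⟩ ⟨-z,0,0,-1⟩ (prime_s7 hlprime) hl7p hl5 hl7
      (by norm_num [N, sub_def]) h
  have nd53 : ¬ s3 l ∣ s5 l :=
    fun h => nd (s5 l) (s3 l) ⟨-z,-1,0,0⟩ ⟨-z,0,0,1⟩ (prime_s3 hlprime) hl3p hl5 hl3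
      (by norm_num [N, sub_def]) h
  -- chain: l * s3 l * s5 l * s7 l ∣ C p
  obtain ⟨c1, hc1⟩ := hlp
  have h3c : s3 l ∣ c1 := by
    rcases ((prime_s3 hlprime).2.2 l c1 (hc1 ▸ hl3p)) with h | h
    · exact absurd h nd13
    · exact h
  obtain ⟨c2, hc2⟩ := h3c
  have h5c : s5 l ∣ c2 := by
    have : s5 l ∣ l * (s3 l * c2) := by rw [← hc2, ← hc1]; exact hl5p
    rcases (prime_s5 hlprime).2.2 l (s3 l * c2) this with h | h
    · exact absurd h nd15
    rcases (prime_s5 hlprime).2.2 (s3 l) c2 h with h' | h'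
    · exact absurd h' nd35
    · exact h'
  obtain ⟨c3, hc3⟩ := h5c
  have h7c : s7 l ∣ c3 := by
    have : s7 l ∣ l * (s3 l * (s5 l * c3)) := by rw [← hc3, ← hc2, ← hc1]; exact hl7p
    rcases (prime_s7 hlprime).2.2 l _ this with h | h
    · exact absurd h nd17
    rcases (prime_s7 hlprime).2.2 (s3 l) _ h with h' | h'
    · exact absurd h' nd37
    rcases (prime_s7 hlprime).2.2 (s5 l) c3 h' with h'' | h''
    · exact absurd h'' nd57
    · exact h''
  obtain ⟨c4, hc4⟩ := h7c
  have hfact : C p = C (N l) * c4 := by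
    rw [hc1, hc2, hc3, hc4, ← prod_conj]; ring
  have hpfact : p = N l * c4.x0 := by
    have := congrArg Zw.x0 hfact
    simpa [C, mul_def] using this
  -- N l = p
  have hl0 : l ≠ 0 := hlprime.ne_zero
  have hNl_pos : 0 < N l := N_pos hl0
  have hNl : N l = p := by
    rcases hp.irreducible.isUnit_or_isUnit hpfact with h | h
    · rw [Int.isUnit_iff] at h
      exact absurd (isUnit_of_N h) hlprime.not_unit
    · rw [Int.isUnit_iff] at h
      rcases h with h | h
      · rw [h, mul_one] at hpfact; omega
      · rw [h] at hpfact; omega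
  -- β and its factorization
  set β : Zw := ⟨b₀, b₁, 0, -b₁⟩ with hβdef
  have h5β : s5 (⟨b₀,b₁,0,-b₁⟩ : Zw) = ⟨b₀,-b₁,0,b₁⟩ := by ext <;> simp [s5]
  have hββ : β * s5 β = C p := by
    rw [hβdef, h5β]
    apply Zw.ext
    · show b₀*b₀ - b₁*b₁ - 0*0 - (-b₁)*(-b₁) = p
      linear_combination -hn
    · show b₀*(-b₁) + b₁*b₀ - 0*b₁ - (-b₁)*0 = 0
      ring
    · show b₀*0 + b₁*(-b₁) + 0*b₀ - (-b₁)*b₁ = 0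
      ring
    · show b₀*b₁ + b₁*0 + 0*(-b₁) + (-b₁)*b₀ = 0
      ring
  have hlCp2 : l ∣ β * s5 β := by rw [hββ]; exact ⟨c1, hc1⟩
  -- choose the prime π dividing β
  obtain ⟨π, hπprime, hπN, hπβ, hπnass⟩ :
      ∃ π : Zw, Prime π ∧ N π = p ∧ π ∣ β ∧ ¬ s7 π ∣ π := by
    rcases hlprime.2.2 β (s5 β) hlCp2 with h | h
    · exact ⟨l, hlprime, hNl, h, nd17⟩
    · refine ⟨s5 l, prime_s5 hlprime, by rw [N_s5, hNl], ?_, ?_⟩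
      · have := dvd_s5 h; rwa [s5_s5] at this
      · have h75 : s7 (s5 l) = s3 l := by ext <;> simp [s7, s5, s3]
        rw [h75]; exact nd53
  -- β = (s7 π * π) * t
  have hβ7 : s7 β = β := by rw [hβdef]; ext <;> simp [s7]
  have h7β : s7 π ∣ β := by have := dvd_s7 hπβ; rwa [hβ7] at this
  obtain ⟨t1, ht1⟩ := hπβ
  have h7t1 : s7 π ∣ t1 := by
    rcases (prime_s7 hπprime).2.2 π t1 (ht1 ▸ h7β) with h | h
    · exact absurd h hπnass
    · exact h
  obtain ⟨t, ht⟩ := h7t1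
  have hβfac : β = (s7 π * π) * t := by rw [ht1, ht]; ring
  -- norms
  have hNβ : N β = p^2 := by
    have : N β = (b₀^2+b₁^2+0^2+(-b₁)^2)^2 - 2*(b₀*b₁+b₁*0+0*(-b₁)-b₀*(-b₁))^2 := rfl
    rw [this]; nlinarith [hn]
  have hNt : N t = 1 := by
    have h1 := congrArg N hβfac
    rw [N_mul, N_mul, N_s7, hπN, hNβ] at h1
    have h2 : p*p*1 = p*p*(N t) := by linarith [h1]
    exact (mul_left_cancel₀ (mul_ne_zero hp.ne_zero hp.ne_zero) h2).symm
  -- t is fixed by s7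
  have hππ0 : s7 π * π ≠ 0 := by
    intro h
    rcases mul_eq_zero.mp h with h' | h'
    · exact hπprime.ne_zero (by simpa [s7, Zw.ext_iff] using congrArg s7 h')
    · exact hπprime.ne_zero h'
  have ht7 : s7 t = t := by
    have h1 : β = (s7 π * π) * s7 t := by
      have := congrArg s7 hβfac
      rw [hβ7, s7_mul, s7_mul, s7_s7] at this
      rw [this]; ring
    have := hβfac.symm.trans h1
    exact (mul_left_cancel₀ hππ0 this).symm
  have ht2 : t.x2 = 0 := by
    have := congrArg Zw.x2 ht7
    simp [s7] at this
    omega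
  have ht3 : t.x3 = -t.x1 := by
    have := congrArg Zw.x3 ht7
    simp [s7] at this
    omega
  obtain ⟨e0, e1, htstruct⟩ : ∃ e0 e1 : ℤ, t = ⟨e0, e1, 0, -e1⟩ :=
    ⟨t.x0, t.x1, by ext <;> simp [ht2, ht3]⟩
  rw [htstruct] at hNt
  have hNt' : (e0^2 - 2*e1^2)^2 = 1 := by
    have h1 := N_eq (⟨e0, e1, 0, -e1⟩ : Zw)
    rw [hNt] at h1
    simp only [S, Cr] at h1
    linear_combination -h1
  -- real positivity of the pair (c0, c1)
  obtain ⟨c0, c1, hππ, hcnorm, hc_emb1, hc_emb2⟩ :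
      ∃ c0 c1 : ℤ, s7 π * π = (⟨c0, c1, 0, -c1⟩ : Zw) ∧ c0^2 - 2*c1^2 = p ∧
        0 ≤ (c0:ℝ) + c1*Real.sqrt 2 ∧ 0 ≤ (c0:ℝ) - c1*Real.sqrt 2 :=
    ⟨S π, Cr π, conj_mul_self π, by have h9 := hπN; rw [N_eq] at h9; exact h9,
      emb_nonneg π, emb_nonneg' π⟩
  have hcprod : ((c0:ℝ) + c1*Real.sqrt 2) * ((c0:ℝ) - c1*Real.sqrt 2) = (p:ℝ) := by
    have h2 : ((c0:ℝ) + c1*Real.sqrt 2) * ((c0:ℝ) - c1*Real.sqrt 2)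
        = (c0:ℝ)^2 - (c1:ℝ)^2 * (Real.sqrt 2)^2 := by ring
    rw [h2, hs2]
    exact_mod_cast (by linarith [hcnorm] : c0^2 - c1^2*2 = p)
  have hppos' : (0:ℝ) < p := by exact_mod_cast hppos
  have hc_pos1 : 0 < (c0:ℝ) + c1*Real.sqrt 2 := by
    rcases lt_or_eq_of_le hc_emb1 with h | h
    · exact h
    · exfalso
      have h0 : (p:ℝ) = 0 := by rw [← hcprod, ← h, zero_mul]
      linarith [hppos']
  have hc_pos2 : 0 < (c0:ℝ) - c1*Real.sqrt 2 := by
    rcases lt_or_eq_of_le hc_emb2 with h | h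
    · exact h
    · exfalso
      have h0 : (p:ℝ) = 0 := by rw [← hcprod, ← h, mul_zero]
      linarith [hppos']
  -- coordinates of the factorization
  have hβstruct : (⟨b₀, b₁, 0, -b₁⟩ : Zw) = (⟨c0,c1,0,-c1⟩ : Zw) * ⟨e0,e1,0,-e1⟩ := by
    rw [← hππ, ← htstruct, ← hβfac, hβdef]
  have hb0 : b₀ = c0*e0 + 2*c1*e1 := by
    have h := congrArg Zw.x0 hβstruct
    simp only [mul_def] at h
    linear_combination h
  have hb1 : b₁ = c0*e1 + c1*e0 := by
    have h := congrArg Zw.x1 hβstruct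
    simp only [mul_def] at h
    linear_combination h
  have hb0' : (b₀:ℝ) = c0*e0 + 2*c1*e1 := by exact_mod_cast hb0
  have hb1' : (b₁:ℝ) = c0*e1 + c1*e0 := by exact_mod_cast hb1
  have hr1 : (b₀:ℝ) + b₁*Real.sqrt 2
      = ((c0:ℝ) + c1*Real.sqrt 2) * ((e0:ℝ) + e1*Real.sqrt 2) := by
    linear_combination hb0' + Real.sqrt 2 * hb1' + (-(c1:ℝ)*e1)*hs2
  have hr2 : (b₀:ℝ) - b₁*Real.sqrt 2
      = ((c0:ℝ) - c1*Real.sqrt 2) * ((e0:ℝ) - e1*Real.sqrt 2) := by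
    linear_combination hb0' - Real.sqrt 2 * hb1' + (-(c1:ℝ)*e1)*hs2
  have he_emb1 : 0 ≤ (e0:ℝ) + e1*Real.sqrt 2 := by
    by_contra hcon
    push_neg at hcon
    have h9 := mul_pos hc_pos1 (neg_pos.mpr hcon)
    rw [mul_neg] at h9
    linarith [hr1, hb, h9]
  have he_emb2 : 0 ≤ (e0:ℝ) - e1*Real.sqrt 2 := by
    by_contra hcon
    push_neg at hcon
    have h9 := mul_pos hc_pos2 (neg_pos.mpr hcon)
    rw [mul_neg] at h9
    linarith [hr2, hbb, h9]
  have heprod : ((e0:ℝ) + e1*Real.sqrt 2) * ((e0:ℝ) - e1*Real.sqrt 2)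
      = ((e0^2 - 2*e1^2 : ℤ) : ℝ) := by
    push_cast
    linear_combination (-(e1:ℝ)^2)*hs2
  have hennorm : e0^2 - 2*e1^2 = 1 := by
    have hfac2 : (e0^2 - 2*e1^2 - 1)*(e0^2 - 2*e1^2 + 1) = 0 := by linear_combination hNt'
    rcases mul_eq_zero.mp hfac2 with h | h
    · omega
    · exfalso
      have hv : e0^2 - 2*e1^2 = -1 := by omega
      rw [hv] at heprod
      have heprod' : ((e0:ℝ) + e1*Real.sqrt 2) * ((e0:ℝ) - e1*Real.sqrt 2) = -1 := by
        rw [heprod]; norm_num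
      nlinarith [heprod', mul_nonneg he_emb1 he_emb2]
  have heprod1 : ((e0:ℝ) + e1*Real.sqrt 2) * ((e0:ℝ) - e1*Real.sqrt 2) = 1 := by
    rw [hennorm] at heprod
    rw [heprod]; norm_num
  have he0pos : 1 ≤ e0 := by
    have h2 : (0:ℝ) < ((e0:ℝ) + e1*Real.sqrt 2) := by
      rcases lt_or_eq_of_le he_emb1 with h | h
      · exact h
      · exfalso
        have h0 : (1:ℝ) = 0 := by rw [← heprod1, ← h, zero_mul]
        norm_num at h0
    have h3 : (0:ℝ) < ((e0:ℝ) - e1*Real.sqrt 2) := by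
      rcases lt_or_eq_of_le he_emb2 with h | h
      · exact h
      · exfalso
        have h0 : (1:ℝ) = 0 := by rw [← heprod1, ← h, mul_zero]
        norm_num at h0
    have h4 : (0:ℝ) < 2*e0 := by linarith
    have h5 : (0:ℤ) < e0 := by exact_mod_cast (by linarith : (0:ℝ) < (e0:ℝ))
    omega
  -- Pell descent
  obtain ⟨x0, x1, hx0, hx1⟩ := pell_sq e0.toNat e0 e1 rfl he0pos hennorm
  set ν : Zw := ⟨x0, x1, 0, -x1⟩ with hν
  have hνν : ν * ν = t := by
    rw [htstruct, hν]
    ext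
    · show x0*x0 - x1*(-x1) - 0*0 - (-x1)*x1 = e0
      linear_combination -hx0
    · show x0*x1 + x1*x0 - 0*(-x1) - (-x1)*0 = e1
      linear_combination -hx1
    · show x0*0 + x1*x1 + 0*x0 - (-x1)*(-x1) = 0
      ring
    · show x0*(-x1) + x1*0 + 0*x1 + (-x1)*x0 = -e1
      linear_combination hx1
  have hν7 : s7 ν = ν := by ext <;> simp [s7, hν]
  refine ⟨π * ν, ?_, ?_⟩
  · have key : s7 (π*ν) * (π*ν) = β := by
      rw [s7_mul, hν7]
      calc s7 π * ν * (π * ν) = (s7 π * π) * (ν * ν) := by ring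
        _ = (s7 π * π) * t := by rw [hνν]
        _ = β := hβfac.symm
    have := congrArg Zw.x0 ((conj_mul_self (π*ν)).symm.trans key)
    simpa [hβdef] using this
  · have key : s7 (π*ν) * (π*ν) = β := by
      rw [s7_mul, hν7]
      calc s7 π * ν * (π * ν) = (s7 π * π) * (ν * ν) := by ring
        _ = (s7 π * π) * t := by rw [hνν]
        _ = β := hβfac.symm
    have := congrArg Zw.x1 ((conj_mul_self (π*ν)).symm.trans key)
    simpa [hβdef] using this

end Zw



lemma omega_facts : omegaC^4 = -1 ∧ (starRingEnd ℂ) omegaC = -omegaC^3 ∧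
    omegaC - omegaC^3 = ((Real.sqrt 2 : ℝ) : ℂ) := by
  have hs2 : (Real.sqrt 2:ℝ)^2 = 2 := Real.sq_sqrt (by norm_num)
  have hsC : ((Real.sqrt 2 : ℝ) : ℂ)^2 = 2 := by exact_mod_cast hs2
  have hsC0 : ((Real.sqrt 2:ℝ):ℂ) ≠ 0 := by
    simpa using Complex.ofReal_ne_zero.mpr (ne_of_gt (Real.sqrt_pos.mpr (by norm_num)))
  have hI : (Complex.I)^2 = -1 := Complex.I_sq
  have hconj : (starRingEnd ℂ) omegaC = (1 - Complex.I) / ((Real.sqrt 2 : ℝ) : ℂ) := by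
    rw [omegaC, map_div₀, map_add, map_one, Complex.conj_I, Complex.conj_ofReal]
    ring
  have hW2 : omegaC^2 = Complex.I := by
    rw [omegaC, div_pow, hsC, div_eq_iff (by norm_num : (2:ℂ) ≠ 0)]
    linear_combination hI
  have h3 : omegaC^3 = Complex.I * omegaC := by
    rw [pow_succ, hW2]
  refine ⟨?_, ?_, ?_⟩
  · rw [show (4:ℕ) = 2*2 from rfl, pow_mul, hW2, hI]
  · rw [hconj, h3, omegaC]
    field_simp
    first
    | linear_combination hI
    | linear_combination (((Real.sqrt 2:ℝ):ℂ))*hI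
    | linear_combination -hI
    | linear_combination -(((Real.sqrt 2:ℝ):ℂ))*hI
  · rw [h3, omegaC]
    field_simp
    first
    | linear_combination -hI - hsC
    | linear_combination -hI + hsC
    | linear_combination hI - hsC
    | linear_combination hI + hsC
    | linear_combination -(((Real.sqrt 2:ℝ):ℂ))*hI - hsC
    | linear_combination (((Real.sqrt 2:ℝ):ℂ))*hI + hsC

lemma final_step (a0 a1 a2 a3 b0 b1 : ℤ)
    (h1 : a0^2+a1^2+a2^2+a3^2 = b0) (h2 : a0*a1+a1*a2+a2*a3-a0*a3 = b1) :
    (starRingEnd ℂ) ((a0 : ℂ) + (a1 : ℂ) * omegaC + (a2 : ℂ) * omegaC ^ 2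
          + (a3 : ℂ) * omegaC ^ 3)
      * ((a0 : ℂ) + (a1 : ℂ) * omegaC + (a2 : ℂ) * omegaC ^ 2 + (a3 : ℂ) * omegaC ^ 3)
      = (((b0 : ℝ) + (b1 : ℝ) * Real.sqrt 2 : ℝ) : ℂ) := by
  obtain ⟨hW4, hWc, hWs⟩ := omega_facts
  have h1C : (a0:ℂ)^2+(a1:ℂ)^2+(a2:ℂ)^2+(a3:ℂ)^2 = (b0:ℂ) := by exact_mod_cast h1
  have h2C : (a0:ℂ)*(a1:ℂ)+(a1:ℂ)*(a2:ℂ)+(a2:ℂ)*(a3:ℂ)-(a0:ℂ)*(a3:ℂ) = (b1:ℂ) := by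
    exact_mod_cast h2
  set W : ℂ := omegaC
  set s : ℂ := ((Real.sqrt 2 : ℝ) : ℂ)
  have hRHS : (((b0 : ℝ) + (b1 : ℝ) * Real.sqrt 2 : ℝ) : ℂ) = (b0:ℂ) + (b1:ℂ)*s := by
    push_cast; ring
  rw [hRHS]
  simp only [map_add, map_mul, map_pow, map_intCast, hWc]
  linear_combination h1C + (W - W^3)*h2C + (b1:ℂ)*hWs
    + (-(a3:ℂ)^2 - (a2:ℂ)^2 - (a1:ℂ)^2 - W*(a2:ℂ)*(a3:ℂ) - W*(a1:ℂ)*(a2:ℂ) + W*(a0:ℂ)*(a3:ℂ)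
       + W^2*(a0:ℂ)*(a2:ℂ) + W^3*(a2:ℂ)*(a3:ℂ) + W^3*(a1:ℂ)*(a2:ℂ) + W^4*(a3:ℂ)^2
       + W^4*(a2:ℂ)^2 + W^5*(a2:ℂ)*(a3:ℂ) - W^5*(a0:ℂ)*(a3:ℂ) - W^6*(a1:ℂ)*(a3:ℂ)
       - W^7*(a2:ℂ)*(a3:ℂ) - W^8*(a3:ℂ)^2)*hW4


/-- If β = b₀ + b₁√2 ∈ Z[√2] satisfies β ≥ 0, β• ≥ 0, and n = β•β is a prime
    congruent to 1 mod 8, then the relative norm equation α†α = β has a solution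
    α ∈ Z[ω]. -/
theorem stmt5 (b₀ b₁ : ℤ)
    (hβ : 0 ≤ (b₀ : ℝ) + (b₁ : ℝ) * Real.sqrt 2)
    (hβb : 0 ≤ (b₀ : ℝ) - (b₁ : ℝ) * Real.sqrt 2)
    (n : ℤ) (hn : n = b₀ ^ 2 - 2 * b₁ ^ 2) (hp : Prime n) (hmod : n % 8 = 1) :
    ∃ a₀ a₁ a₂ a₃ : ℤ,
      (starRingEnd ℂ) ((a₀ : ℂ) + (a₁ : ℂ) * omegaC + (a₂ : ℂ) * omegaC ^ 2
            + (a₃ : ℂ) * omegaC ^ 3)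
        * ((a₀ : ℂ) + (a₁ : ℂ) * omegaC + (a₂ : ℂ) * omegaC ^ 2 + (a₃ : ℂ) * omegaC ^ 3)
        = (((b₀ : ℝ) + (b₁ : ℝ) * Real.sqrt 2 : ℝ) : ℂ) := by
  have hs2 : (Real.sqrt 2:ℝ)^2 = 2 := Real.sq_sqrt (by norm_num)
  have hnpos : 0 < n := by
    rcases lt_trichotomy n 0 with h | h | h
    · exfalso
      have hr : ((n:ℝ)) = ((b₀:ℝ)+b₁*Real.sqrt 2)*((b₀:ℝ)-b₁*Real.sqrt 2) := by
        rw [hn]; push_cast; linear_combination ((b₁:ℝ)^2)*hs2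
      have hcast : (n:ℝ) < 0 := by exact_mod_cast h
      linarith [mul_nonneg hβ hβb]
    · exact absurd h hp.ne_zero
    · exact h
  obtain ⟨a, hS, hCr⟩ := Zw.main_construct n hp hmod hnpos b₀ b₁ hn hβ hβb
  refine ⟨a.x0, a.x1, a.x2, a.x3, ?_⟩
  apply final_step
  · exact hS
  · exact hCr
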